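/- Let T > 0, H = ℝᴺ, X = H × H, and let J be the symplectic operator J(p,q) = (−q, p) on X. Define F(u) = ∫₀ᵀ ⟨J u̇(t), u(t)⟩ dt + ⟨u(T) − u(0), J (u(T)+u(0))/2⟩ on A²_X. Then F is weakly continuous: if (u_k) is a sequence in A²_X and u ∈ A²_X are such that (u_k(0)+u_k(T))/2 → (u(0)+u(T))/2 and u̇_k ⇀ u̇ weakly in L²(0,T;X), then F(u_k) → F(u). -/

import Mathlib

open MeasureTheory Set Filter Topology RealInnerProductSpace

noncomputable section

set_option linter.unusedSectionVars false
set_option maxHeartbeats 1000000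

/-- `u` is an absolutely continuous path on `[0,T]` with derivative `u'` in `L²(0,T;F)`. -/
def InA2 {F : Type*} [NormedAddCommGroup F] [NormedSpace ℝ F]
    (T : ℝ) (u u' : ℝ → F) : Prop :=
  MemLp u' 2 (volume.restrict (Set.Ioc (0:ℝ) T)) ∧
  ∀ t ∈ Set.Icc (0:ℝ) T, u t = u 0 + ∫ s in (0:ℝ)..t, u' s

variable {H : Type*} [NormedAddCommGroup H] [InnerProductSpace ℝ H]

/-- The symplectic operator `J(p,q) = (-q,p)` on `X = H × H`. -/
def Jmap (a : H × H) : H × H := (-a.2, a.1)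

/-- The inner product on `X = H × H`. -/
def pinX (a b : H × H) : ℝ := ⟪a.1, b.1⟫ + ⟪a.2, b.2⟫

/-- The functional `F(u) = ∫₀ᵀ ⟨Ju̇,u⟩ dt + ⟨u(T)-u(0), J(u(T)+u(0))/2⟩` on `A²_X`. -/
def Ffun (T : ℝ) (u u' : ℝ → H × H) : ℝ :=
  (∫ t in Set.Ioc (0:ℝ) T, pinX (Jmap (u' t)) (u t)) +
    pinX (u T - u 0) (Jmap ((2:ℝ)⁻¹ • (u T + u 0)))

def Wfun {F : Type*} [NormedAddCommGroup F] [NormedSpace ℝ F] (T : ℝ) (h : ℝ → F) (t : ℝ) : F :=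
  (∫ s in (0:ℝ)..t, h s) - (2:ℝ)⁻¹ • (∫ s in (0:ℝ)..T, h s)

section helpers

variable {F : Type*} [NormedAddCommGroup F] [NormedSpace ℝ F]

lemma prim_contOn {T : ℝ} (hT : 0 ≤ T) {h : ℝ → F}
    (hi : IntegrableOn h (Ioc 0 T) volume) :
    ContinuousOn (fun t => ∫ s in (0:ℝ)..t, h s) (Icc 0 T) := by
  have hi' : IntegrableOn h (uIcc 0 T) volume := by
    rw [uIcc_of_le hT, integrableOn_Icc_iff_integrableOn_Ioc]; exact hi
  simpa [uIcc_of_le hT] using intervalIntegral.continuousOn_primitive_interval hi'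

lemma prim_norm_le {T : ℝ} {h : ℝ → F}
    (hi : IntegrableOn h (Ioc 0 T) volume) {t : ℝ} (ht : t ∈ Icc (0:ℝ) T) :
    ‖∫ s in (0:ℝ)..t, h s‖ ≤ ∫ s in Ioc (0:ℝ) T, ‖h s‖ := by
  rw [intervalIntegral.integral_of_le ht.1]
  refine (norm_integral_le_integral_norm _).trans ?_
  refine setIntegral_mono_set hi.norm (Eventually.of_forall fun s => norm_nonneg _) ?_
  exact HasSubset.Subset.eventuallyLE (Ioc_subset_Ioc_right ht.2)

lemma Wfun_norm_le {T : ℝ} {h : ℝ → F}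
    (hi : IntegrableOn h (Ioc 0 T) volume) {t : ℝ} (ht : t ∈ Icc (0:ℝ) T) :
    ‖Wfun T h t‖ ≤ (3/2) * ∫ s in Ioc (0:ℝ) T, ‖h s‖ := by
  have h0T : (0:ℝ) ≤ T := le_trans ht.1 ht.2
  have h1 := prim_norm_le hi ht
  have h2 := prim_norm_le hi (show T ∈ Icc (0:ℝ) T from ⟨h0T, le_rfl⟩)
  calc ‖Wfun T h t‖ ≤ ‖∫ s in (0:ℝ)..t, h s‖ + ‖(2:ℝ)⁻¹ • (∫ s in (0:ℝ)..T, h s)‖ :=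
        norm_sub_le _ _
    _ ≤ (∫ s in Ioc (0:ℝ) T, ‖h s‖) + (2:ℝ)⁻¹ * (∫ s in Ioc (0:ℝ) T, ‖h s‖) := by
        rw [norm_smul]
        refine add_le_add h1 ?_
        simp only [norm_inv, Real.norm_ofNat]
        exact mul_le_mul_of_nonneg_left h2 (by norm_num)
    _ = (3/2) * ∫ s in Ioc (0:ℝ) T, ‖h s‖ := by ring

lemma Wfun_contOn {T : ℝ} (hT : 0 ≤ T) {h : ℝ → F}
    (hi : IntegrableOn h (Ioc 0 T) volume) :
    ContinuousOn (Wfun T h) (Icc 0 T) :=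
  (prim_contOn hT hi).sub continuousOn_const

lemma Wfun_aesm {T : ℝ} (hT : 0 ≤ T) {h : ℝ → F}
    (hi : IntegrableOn h (Ioc 0 T) volume) :
    AEStronglyMeasurable (Wfun T h) (volume.restrict (Ioc 0 T)) :=
  ((Wfun_contOn hT hi).mono Ioc_subset_Icc_self).aestronglyMeasurable measurableSet_Ioc

lemma Wfun_memℒp {T : ℝ} (hT : 0 ≤ T) {h : ℝ → F}
    (hi : IntegrableOn h (Ioc 0 T) volume) :
    MemLp (Wfun T h) 2 (volume.restrict (Ioc 0 T)) := by
  refine MemLp.of_bound (Wfun_aesm hT hi) ((3/2) * ∫ s in Ioc (0:ℝ) T, ‖h s‖) ?_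
  rw [ae_restrict_iff' measurableSet_Ioc]
  exact Eventually.of_forall fun t htm => Wfun_norm_le hi (Ioc_subset_Icc_self htm)

end helpers

lemma pinX_J_skew (a b : H × H) : pinX (Jmap a) b = - pinX a (Jmap b) := by
  simp only [pinX, Jmap, inner_neg_left, inner_neg_right, neg_add_rev]
  ring

lemma pinX_add_right (a b c : H × H) : pinX a (b + c) = pinX a b + pinX a c := by
  simp [pinX, inner_add_right]; ring

lemma abs_pinX_le (a b : H × H) : |pinX a b| ≤ 2 * (‖a‖ * ‖b‖) := by
  have h1 : |((⟪a.1, b.1⟫ : ℝ))| ≤ ‖a‖ * ‖b‖ :=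
    (abs_real_inner_le_norm _ _).trans
      (mul_le_mul (norm_fst_le a) (norm_fst_le b) (norm_nonneg _) (norm_nonneg _))
  have h2 : |((⟪a.2, b.2⟫ : ℝ))| ≤ ‖a‖ * ‖b‖ :=
    (abs_real_inner_le_norm _ _).trans
      (mul_le_mul (norm_snd_le a) (norm_snd_le b) (norm_nonneg _) (norm_nonneg _))
  calc |pinX a b| ≤ |((⟪a.1, b.1⟫ : ℝ))| + |((⟪a.2, b.2⟫ : ℝ))| := abs_add_le _ _
    _ ≤ 2 * (‖a‖ * ‖b‖) := by linarith

lemma norm_Jmap (a : H × H) : ‖Jmap a‖ = ‖a‖ := by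
  simp [Jmap, Prod.norm_def, max_comm]

lemma aesm_pinX {μ : Measure ℝ} {f w : ℝ → H × H} (hf : AEStronglyMeasurable f μ)
    (hw : AEStronglyMeasurable w μ) :
    AEStronglyMeasurable (fun t => pinX (f t) (w t)) μ := by
  have h1 : AEStronglyMeasurable (fun t => (f t).1) μ :=
    continuous_fst.comp_aestronglyMeasurable hf
  have h2 : AEStronglyMeasurable (fun t => (f t).2) μ :=
    continuous_snd.comp_aestronglyMeasurable hf
  have h3 : AEStronglyMeasurable (fun t => (w t).1) μ :=
    continuous_fst.comp_aestronglyMeasurable hw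
  have h4 : AEStronglyMeasurable (fun t => (w t).2) μ :=
    continuous_snd.comp_aestronglyMeasurable hw
  exact (h1.inner h3).add (h2.inner h4)

lemma integrable_pinX {μ : Measure ℝ} {f w : ℝ → H × H} (hf : Integrable f μ)
    (hw : AEStronglyMeasurable w μ) {c : ℝ} (hc : ∀ᵐ t ∂μ, ‖w t‖ ≤ c) :
    Integrable (fun t => pinX (f t) (w t)) μ := by
  refine Integrable.mono' (hf.norm.const_mul (2 * c)) (aesm_pinX hf.1 hw) ?_
  filter_upwards [hc] with t htc
  have h := abs_pinX_le (f t) (w t)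
  have h2 : ‖f t‖ * ‖w t‖ ≤ ‖f t‖ * c := mul_le_mul_of_nonneg_left htc (norm_nonneg _)
  simp only [Real.norm_eq_abs]
  nlinarith [norm_nonneg (f t)]

lemma integrable_Jmap_comp {μ : Measure ℝ} {f : ℝ → H × H} (hf : Integrable f μ) :
    Integrable (fun t => Jmap (f t)) μ :=
  (hf.snd.neg).prodMk hf.fst

variable [CompleteSpace H]

lemma Ffun_eq {T : ℝ} (hT : 0 < T) {u u' : ℝ → H × H}
    (h2 : ∀ t ∈ Icc (0:ℝ) T, u t = u 0 + ∫ s in (0:ℝ)..t, u' s)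
    (hi : IntegrableOn u' (Ioc 0 T) volume) :
    Ffun T u u' = ∫ t in Ioc (0:ℝ) T, pinX (Jmap (u' t)) (Wfun T u' t) := by
  set μ := volume.restrict (Ioc (0:ℝ) T) with hμ
  set D : H × H := ∫ s in (0:ℝ)..T, u' s with hD
  set m : H × H := (2:ℝ)⁻¹ • (u T + u 0) with hm
  have huT : u T = u 0 + D := h2 T ⟨hT.le, le_rfl⟩
  have hDm : u T - u 0 = D := by rw [huT]; abel
  have hmm : m = u 0 + (2:ℝ)⁻¹ • D := by
    rw [hm, huT]; module
  -- pointwise decomposition on Ioc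
  have hum : ∀ t ∈ Ioc (0:ℝ) T, u t = m + Wfun T u' t := by
    intro t ht
    rw [h2 t (Ioc_subset_Icc_self ht), hmm, Wfun, ← hD]
    abel
  -- integrability of the two pieces
  have hJ : Integrable (fun t => Jmap (u' t)) μ := integrable_Jmap_comp hi
  have hWaesm : AEStronglyMeasurable (Wfun T u')  μ := by
    have := ((Set.Ioc_subset_Icc_self (a := (0:ℝ)) (b := T)))
    exact (((intervalIntegral.continuousOn_primitive_interval (by
        rw [uIcc_of_le hT.le, integrableOn_Icc_iff_integrableOn_Ioc]; exact hi)).mono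
        (by rw [uIcc_of_le hT.le]; exact this)).sub continuousOn_const).aestronglyMeasurable
      measurableSet_Ioc
  have hWbd : ∀ᵐ t ∂μ, ‖Wfun T u' t‖ ≤ (3/2) * ∫ s in Ioc (0:ℝ) T, ‖u' s‖ := by
    rw [hμ, ae_restrict_iff' measurableSet_Ioc]
    refine Eventually.of_forall fun t ht => ?_
    have h1 : ‖∫ s in (0:ℝ)..t, u' s‖ ≤ ∫ s in Ioc (0:ℝ) T, ‖u' s‖ := by
      rw [intervalIntegral.integral_of_le ht.1.le]
      refine (norm_integral_le_integral_norm _).trans ?_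
      exact setIntegral_mono_set hi.norm (Eventually.of_forall fun s => norm_nonneg _)
        (HasSubset.Subset.eventuallyLE (Ioc_subset_Ioc_right ht.2))
    have h2' : ‖∫ s in (0:ℝ)..T, u' s‖ ≤ ∫ s in Ioc (0:ℝ) T, ‖u' s‖ := by
      rw [intervalIntegral.integral_of_le hT.le]
      exact norm_integral_le_integral_norm _
    calc ‖Wfun T u' t‖ ≤ ‖∫ s in (0:ℝ)..t, u' s‖ + ‖(2:ℝ)⁻¹ • (∫ s in (0:ℝ)..T, u' s)‖ :=
          norm_sub_le _ _
      _ ≤ (∫ s in Ioc (0:ℝ) T, ‖u' s‖) + (2:ℝ)⁻¹ * (∫ s in Ioc (0:ℝ) T, ‖u' s‖) := by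
          rw [norm_smul]
          refine add_le_add h1 ?_
          simp only [norm_inv, Real.norm_ofNat]
          exact mul_le_mul_of_nonneg_left h2' (by norm_num)
      _ = (3/2) * ∫ s in Ioc (0:ℝ) T, ‖u' s‖ := by ring
  have hint1 : Integrable (fun t => pinX (Jmap (u' t)) (Wfun T u' t)) μ :=
    integrable_pinX hJ hWaesm hWbd
  have hint2 : Integrable (fun t => pinX (Jmap (u' t)) m) μ :=
    integrable_pinX hJ aestronglyMeasurable_const (Eventually.of_forall fun _ => le_refl ‖m‖)
  -- split the integral
  have hsplit : (∫ t in Ioc (0:ℝ) T, pinX (Jmap (u' t)) (u t)) =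
      (∫ t in Ioc (0:ℝ) T, pinX (Jmap (u' t)) (Wfun T u' t)) +
      (∫ t in Ioc (0:ℝ) T, pinX (Jmap (u' t)) m) := by
    rw [← integral_add hint1 hint2]
    refine setIntegral_congr_fun measurableSet_Ioc fun t ht => ?_
    rw [hum t ht, pinX_add_right]
    ring
  -- constant part equals pinX (Jmap D) m
  have hconst : (∫ t in Ioc (0:ℝ) T, pinX (Jmap (u' t)) m) = pinX (Jmap D) m := by
    set L : (H × H) →L[ℝ] ℝ :=
      (innerSL ℝ m.2).comp (ContinuousLinearMap.fst ℝ H H) -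
        (innerSL ℝ m.1).comp (ContinuousLinearMap.snd ℝ H H) with hL
    have hLa : ∀ a : H × H, pinX (Jmap a) m = L a := by
      intro a
      simp [hL, pinX, Jmap, inner_neg_left, real_inner_comm]
      ring
    calc (∫ t in Ioc (0:ℝ) T, pinX (Jmap (u' t)) m) = ∫ t in Ioc (0:ℝ) T, L (u' t) := by
          refine setIntegral_congr_fun measurableSet_Ioc fun t _ => hLa _
      _ = L (∫ t in Ioc (0:ℝ) T, u' t) := L.integral_comp_comm hi
      _ = L D := by rw [hD, intervalIntegral.integral_of_le hT.le]
      _ = pinX (Jmap D) m := (hLa D).symm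
  rw [Ffun, hsplit, hconst, hDm, pinX_J_skew]
  ring

section core

variable {Y : Type*} [NormedAddCommGroup Y] [InnerProductSpace ℝ Y] [FiniteDimensional ℝ Y]

lemma inner_integrable_bdd {μ : Measure ℝ} {h : ℝ → Y} (hi : Integrable h μ)
    {w : ℝ → Y} (hw : AEStronglyMeasurable w μ) {c : ℝ} (hc : ∀ᵐ t ∂μ, ‖w t‖ ≤ c) :
    Integrable (fun t => (⟪h t, w t⟫ : ℝ)) μ := by
  refine Integrable.mono' (hi.norm.mul_const c) (hi.1.inner hw) ?_
  filter_upwards [hc] with t htc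
  exact (norm_inner_le_norm _ _).trans (mul_le_mul_of_nonneg_left htc (norm_nonneg _))

lemma core_tendsto (T : ℝ) (hT : 0 < T) (C : Y →L[ℝ] Y)
    (f : ℕ → ℝ → Y) (g : ℝ → Y)
    (hf : ∀ k, MemLp (f k) 2 (volume.restrict (Ioc (0:ℝ) T)))
    (hg : MemLp g 2 (volume.restrict (Ioc (0:ℝ) T)))
    (hweak : ∀ w : ℝ → Y, MemLp w 2 (volume.restrict (Ioc (0:ℝ) T)) →
      Tendsto (fun k => ∫ t in Ioc (0:ℝ) T, (⟪f k t, w t⟫ : ℝ)) atTop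
        (𝓝 (∫ t in Ioc (0:ℝ) T, (⟪g t, w t⟫ : ℝ)))) :
    Tendsto (fun k => ∫ t in Ioc (0:ℝ) T, (⟪f k t, C (Wfun T (f k) t)⟫ : ℝ)) atTop
      (𝓝 (∫ t in Ioc (0:ℝ) T, (⟪g t, C (Wfun T g t)⟫ : ℝ))) := by
  haveI : Fact ((1:ENNReal) ≤ 2) := ⟨one_le_two⟩
  haveI : CompleteSpace Y := FiniteDimensional.complete ℝ Y
  haveI hfin : IsFiniteMeasure (volume.restrict (Ioc (0:ℝ) T)) := by
    constructor
    rw [Measure.restrict_apply_univ, Real.volume_Ioc]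
    exact ENNReal.ofReal_lt_top
  have hfi : ∀ k, Integrable (f k) (volume.restrict (Ioc (0:ℝ) T)) :=
    fun k => (hf k).integrable one_le_two
  have hgi : Integrable g (volume.restrict (Ioc (0:ℝ) T)) := hg.integrable one_le_two
  set F : ℕ → Lp Y 2 (volume.restrict (Ioc (0:ℝ) T)) := fun k => ((hf k).toLp (f k)) with hFdef
  set G : Lp Y 2 (volume.restrict (Ioc (0:ℝ) T)) := hg.toLp g with hGdef
  -- inner products against arbitrary Lp elements converge
  have hwL : ∀ w : Lp Y 2 (volume.restrict (Ioc (0:ℝ) T)),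
      Tendsto (fun k => (⟪F k, w⟫ : ℝ)) atTop (𝓝 (⟪G, w⟫ : ℝ)) := by
    intro w
    have h1 : ∀ k, (⟪F k, w⟫ : ℝ) = ∫ t in Ioc (0:ℝ) T, (⟪f k t, w t⟫ : ℝ) := by
      intro k
      rw [L2.inner_def]
      refine integral_congr_ae ?_
      filter_upwards [(hf k).coeFn_toLp] with t ht
      rw [ht]
    have h2 : (⟪G, w⟫ : ℝ) = ∫ t in Ioc (0:ℝ) T, (⟪g t, w t⟫ : ℝ) := by
      rw [L2.inner_def]
      refine integral_congr_ae ?_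
      filter_upwards [hg.coeFn_toLp] with t ht
      rw [ht]
    rw [h2]
    simp only [h1]
    exact hweak w (Lp.memLp w)
  -- Banach–Steinhaus: uniform norm bound
  obtain ⟨M, hM⟩ : ∃ M, ∀ k, ‖innerSL ℝ (F k)‖ ≤ M := by
    refine banach_steinhaus fun w => ?_
    obtain ⟨Cw, hCw⟩ := (hwL w).norm.bddAbove_range
    exact ⟨Cw, fun k => hCw ⟨k, rfl⟩⟩
  have hFM : ∀ k, ‖F k‖ ≤ M := fun k => by
    have := hM k; rwa [innerSL_apply_norm] at this
  have hM0 : (0:ℝ) ≤ M := le_trans (norm_nonneg _) (hFM 0)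
  -- L¹ bounds
  set one : Lp ℝ 2 (volume.restrict (Ioc (0:ℝ) T)) := (memLp_const (1:ℝ)).toLp _ with hone
  have hL1 : ∀ k, (∫ t in Ioc (0:ℝ) T, ‖f k t‖) ≤ M * ‖one‖ := by
    intro k
    have h1 : (⟪((hf k).norm.toLp _), one⟫ : ℝ) = ∫ t in Ioc (0:ℝ) T, ‖f k t‖ := by
      rw [L2.inner_def]
      refine integral_congr_ae ?_
      filter_upwards [(hf k).norm.coeFn_toLp, (memLp_const (1:ℝ)).coeFn_toLp] with t h1 h2
      rw [h1, h2]
      simp [RCLike.inner_apply, conj_trivial]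
    have h2 : (⟪((hf k).norm.toLp _), one⟫ : ℝ) ≤ ‖((hf k).norm.toLp (fun t => ‖f k t‖))‖ * ‖one‖ :=
      real_inner_le_norm _ _
    have h3 : ‖((hf k).norm.toLp (fun t => ‖f k t‖))‖ = ‖F k‖ := by
      rw [Lp.norm_toLp _ ((hf k).norm), hFdef, Lp.norm_toLp _ (hf k), eLpNorm_norm]
    rw [← h1]
    refine h2.trans ?_
    rw [h3]
    exact mul_le_mul_of_nonneg_right (hFM k) (norm_nonneg _)
  set Cg : ℝ := ∫ t in Ioc (0:ℝ) T, ‖g t‖ with hCg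
  have hCg0 : 0 ≤ Cg := setIntegral_nonneg measurableSet_Ioc fun t _ => norm_nonneg _
  set Cb : ℝ := (3/2) * (M * ‖one‖ + Cg) with hCb
  have hCb0 : 0 ≤ Cb := by
    have : (0:ℝ) ≤ M * ‖one‖ := mul_nonneg hM0 (norm_nonneg _)
    rw [hCb]; nlinarith
  -- pointwise convergence of primitives
  have hprim : ∀ t ∈ Icc (0:ℝ) T,
      Tendsto (fun k => ∫ s in (0:ℝ)..t, f k s) atTop (𝓝 (∫ s in (0:ℝ)..t, g s)) := by
    intro t ht
    set b := stdOrthonormalBasis ℝ Y with hb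
    have key : ∀ (h : ℝ → Y), Integrable h (volume.restrict (Ioc (0:ℝ) T)) → ∀ i,
        (∫ s in Ioc (0:ℝ) T, (⟪h s, (Ioc (0:ℝ) t).indicator (fun _ => b i) s⟫ : ℝ))
          = ⟪b i, ∫ s in (0:ℝ)..t, h s⟫ := by
      intro h hh i
      have e1 : ∀ s, (⟪h s, (Ioc (0:ℝ) t).indicator (fun _ => b i) s⟫ : ℝ)
          = (Ioc (0:ℝ) t).indicator (fun s => (⟪b i, h s⟫ : ℝ)) s := by
        intro s
        by_cases hs : s ∈ Ioc (0:ℝ) t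
        · simp [Set.indicator_of_mem hs, real_inner_comm]
        · simp [Set.indicator_of_notMem hs]
      rw [setIntegral_congr_fun measurableSet_Ioc (fun s _ => e1 s),
        setIntegral_indicator measurableSet_Ioc, Ioc_inter_Ioc, sup_idem,
        min_eq_right ht.2, intervalIntegral.integral_of_le ht.1]
      exact integral_inner (IntegrableOn.mono_set hh (Ioc_subset_Ioc_right ht.2)) (b i)
    have hcoef : ∀ i, Tendsto (fun k => (⟪b i, ∫ s in (0:ℝ)..t, f k s⟫ : ℝ)) atTop
        (𝓝 (⟪b i, ∫ s in (0:ℝ)..t, g s⟫ : ℝ)) := by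
      intro i
      have hw : MemLp ((Ioc (0:ℝ) t).indicator (fun _ => b i)) 2
          (volume.restrict (Ioc (0:ℝ) T)) :=
        MemLp.indicator measurableSet_Ioc (memLp_const (b i))
      have := hweak _ hw
      rw [key g hgi i] at this
      exact Tendsto.congr (fun k => key (f k) (hfi k) i) this
    have hsum := tendsto_finset_sum (Finset.univ)
      (fun i (_ : i ∈ Finset.univ) => (hcoef i).smul_const (b i))
    simpa [b.sum_repr'] using hsum
  -- uniform bound on Wfun differences
  have hWb : ∀ k, ∀ t ∈ Icc (0:ℝ) T, ‖Wfun T (f k) t - Wfun T g t‖ ≤ Cb := by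
    intro k t ht
    have h1 : ‖Wfun T (f k) t‖ ≤ (3/2) * ∫ s in Ioc (0:ℝ) T, ‖f k s‖ := Wfun_norm_le (hfi k) ht
    have h2 : ‖Wfun T g t‖ ≤ (3/2) * Cg := Wfun_norm_le hgi ht
    have h3 := hL1 k
    calc ‖Wfun T (f k) t - Wfun T g t‖ ≤ ‖Wfun T (f k) t‖ + ‖Wfun T g t‖ := norm_sub_le _ _
      _ ≤ Cb := by rw [hCb]; nlinarith
  -- pointwise convergence of the differences
  have hdpt : ∀ t ∈ Icc (0:ℝ) T,
      Tendsto (fun k => Wfun T (f k) t - Wfun T g t) atTop (𝓝 0) := by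
    intro t ht
    have h1 : Tendsto (fun k => Wfun T (f k) t) atTop (𝓝 (Wfun T g t)) := by
      refine Tendsto.sub (hprim t ht) ?_
      exact ((hprim T ⟨hT.le, le_rfl⟩).const_smul ((2:ℝ)⁻¹))
    simpa [sub_self] using h1.sub (tendsto_const_nhds : Tendsto (fun _ : ℕ => Wfun T g t) atTop _)
  -- measurability of differences
  have hdaesm : ∀ k, AEStronglyMeasurable (fun t => Wfun T (f k) t - Wfun T g t)
      (volume.restrict (Ioc (0:ℝ) T)) :=
    fun k => (Wfun_aesm hT.le (hfi k)).sub (Wfun_aesm hT.le hgi)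
  set z : ℕ → ℝ → Y := fun k t => C (Wfun T (f k) t - Wfun T g t) with hz
  have hzaesm : ∀ k, AEStronglyMeasurable (z k) (volume.restrict (Ioc (0:ℝ) T)) :=
    fun k => C.continuous.comp_aestronglyMeasurable (hdaesm k)
  have hzbd : ∀ k, ∀ᵐ t ∂(volume.restrict (Ioc (0:ℝ) T)), ‖z k t‖ ≤ ‖C‖ * Cb := by
    intro k
    rw [ae_restrict_iff' measurableSet_Ioc]
    refine Eventually.of_forall fun t htm => ?_
    refine (C.le_opNorm _).trans ?_
    exact mul_le_mul_of_nonneg_left (hWb k t (Ioc_subset_Icc_self htm)) (norm_nonneg _)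
  -- dominated convergence for the square integrals
  have hZ2 : Tendsto (fun k => ∫ t in Ioc (0:ℝ) T, ‖z k t‖ ^ 2) atTop (𝓝 0) := by
    have := tendsto_integral_of_dominated_convergence (μ := volume.restrict (Ioc (0:ℝ) T))
      (F := fun k t => ‖z k t‖ ^ 2) (f := fun _ => (0:ℝ)) (bound := fun _ => (‖C‖ * Cb) ^ 2)
      (fun k => (continuous_pow 2).comp_aestronglyMeasurable (hzaesm k).norm)
      (integrable_const _)
      (fun k => by
        filter_upwards [hzbd k] with t htb
        rw [Real.norm_of_nonneg (by positivity)]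
        exact pow_le_pow_left₀ (norm_nonneg _) htb 2)
      (by
        rw [ae_restrict_iff' measurableSet_Ioc]
        refine Eventually.of_forall fun t htm => ?_
        have h0 : Tendsto (fun k => z k t) atTop (𝓝 0) := by
          have := (C.continuous.tendsto 0).comp (hdpt t (Ioc_subset_Icc_self htm))
          rw [map_zero] at this; exact this
        have := (h0.norm.pow 2)
        simpa using this)
    simpa using this
  -- Lp elements for z
  have hzmem : ∀ k, MemLp (z k) 2 (volume.restrict (Ioc (0:ℝ) T)) :=
    fun k => MemLp.of_bound (hzaesm k) (‖C‖ * Cb) (hzbd k)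
  set Z : ℕ → Lp Y 2 (volume.restrict (Ioc (0:ℝ) T)) := fun k => (hzmem k).toLp (z k) with hZ
  have hZnorm : ∀ k, ‖Z k‖ ^ 2 = ∫ t in Ioc (0:ℝ) T, ‖z k t‖ ^ 2 := by
    intro k
    rw [← real_inner_self_eq_norm_sq, L2.inner_def]
    refine integral_congr_ae ?_
    filter_upwards [(hzmem k).coeFn_toLp] with t ht
    rw [ht, real_inner_self_eq_norm_sq]
  have hZto0 : Tendsto (fun k => ‖Z k‖) atTop (𝓝 0) := by
    have he : (fun k => ‖Z k‖) = fun k => Real.sqrt (∫ t in Ioc (0:ℝ) T, ‖z k t‖ ^ 2) := by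
      funext k
      rw [← hZnorm k, Real.sqrt_sq (norm_nonneg _)]
    rw [he]
    simpa using hZ2.sqrt
  -- term 1 goes to 0
  have hT1 : Tendsto (fun k => ∫ t in Ioc (0:ℝ) T, (⟪f k t, z k t⟫ : ℝ)) atTop (𝓝 0) := by
    have hrepr : ∀ k, (∫ t in Ioc (0:ℝ) T, (⟪f k t, z k t⟫ : ℝ)) = ⟪F k, Z k⟫ := by
      intro k
      rw [L2.inner_def]
      refine integral_congr_ae ?_
      filter_upwards [(hf k).coeFn_toLp, (hzmem k).coeFn_toLp] with t h1 h2
      rw [h1, h2]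
    refine squeeze_zero_norm (fun k => ?_) (by simpa using hZto0.const_mul M)
    rw [hrepr k, Real.norm_eq_abs]
    refine (abs_real_inner_le_norm _ _).trans ?_
    exact mul_le_mul_of_nonneg_right (hFM k) (norm_nonneg _)
  -- term 2 converges by weak convergence
  set wg : ℝ → Y := fun t => C (Wfun T g t) with hwg
  have hwgmem : MemLp wg 2 (volume.restrict (Ioc (0:ℝ) T)) := by
    have := C.comp_memLp' (Wfun_memℒp hT.le hgi)
    exact this
  have hS := hweak wg hwgmem
  -- integrability of the pieces
  have hint1 : ∀ k, Integrable (fun t => (⟪f k t, z k t⟫ : ℝ)) (volume.restrict (Ioc (0:ℝ) T)) :=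
    fun k => inner_integrable_bdd (hfi k) (hzaesm k) (hzbd k)
  have hwgbd : ∀ᵐ t ∂(volume.restrict (Ioc (0:ℝ) T)), ‖wg t‖ ≤ ‖C‖ * ((3/2) * Cg) := by
    rw [ae_restrict_iff' measurableSet_Ioc]
    refine Eventually.of_forall fun t htm => ?_
    refine (C.le_opNorm _).trans ?_
    exact mul_le_mul_of_nonneg_left (Wfun_norm_le hgi (Ioc_subset_Icc_self htm)) (norm_nonneg _)
  have hint2 : ∀ k, Integrable (fun t => (⟪f k t, wg t⟫ : ℝ)) (volume.restrict (Ioc (0:ℝ) T)) :=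
    fun k => inner_integrable_bdd (hfi k) hwgmem.1 hwgbd
  -- decomposition
  have hdecomp : ∀ k, (∫ t in Ioc (0:ℝ) T, (⟪f k t, C (Wfun T (f k) t)⟫ : ℝ))
      = (∫ t in Ioc (0:ℝ) T, (⟪f k t, z k t⟫ : ℝ)) + ∫ t in Ioc (0:ℝ) T, (⟪f k t, wg t⟫ : ℝ) := by
    intro k
    rw [← integral_add (hint1 k) (hint2 k)]
    refine setIntegral_congr_fun measurableSet_Ioc fun t _ => ?_
    rw [← inner_add_right]
    congr 1
    rw [hz, hwg]
    simp only [map_sub]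
    abel
  have hfinal := hT1.add hS
  rw [zero_add] at hfinal
  exact Tendsto.congr (fun k => (hdecomp k).symm) hfinal

end core

/-- For `H = ℝᴺ` and `X = H × H`, the functional
`F(u) = ∫₀ᵀ ⟨Ju̇,u⟩ dt + ⟨u(T)-u(0), J(u(T)+u(0))/2⟩` is weakly continuous on `A²_X`:
if the midpoints converge and the derivatives converge weakly in `L²(0,T;X)`
then `F(u_k) → F(u)`. -/
theorem F_weakly_continuous (N : ℕ) (T : ℝ) (hT : 0 < T)
    (u : ℕ → ℝ → EuclideanSpace ℝ (Fin N) × EuclideanSpace ℝ (Fin N))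
    (u' : ℕ → ℝ → EuclideanSpace ℝ (Fin N) × EuclideanSpace ℝ (Fin N))
    (v v' : ℝ → EuclideanSpace ℝ (Fin N) × EuclideanSpace ℝ (Fin N))
    (hk : ∀ k, InA2 T (u k) (u' k)) (hv : InA2 T v v')
    (hmid : Tendsto (fun k => (2:ℝ)⁻¹ • (u k 0 + u k T)) atTop
      (nhds ((2:ℝ)⁻¹ • (v 0 + v T))))
    (hweak : ∀ w : ℝ → EuclideanSpace ℝ (Fin N) × EuclideanSpace ℝ (Fin N),
      MemLp w 2 (volume.restrict (Set.Ioc (0:ℝ) T)) →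
      Tendsto (fun k => ∫ t in Set.Ioc (0:ℝ) T, pinX (u' k t) (w t)) atTop
        (nhds (∫ t in Set.Ioc (0:ℝ) T, pinX (v' t) (w t)))) :
    Tendsto (fun k => Ffun T (u k) (u' k)) atTop (nhds (Ffun T v v')) := by
  classical
  let ψ : (EuclideanSpace ℝ (Fin N) × EuclideanSpace ℝ (Fin N)) ≃L[ℝ]
      WithLp 2 (EuclideanSpace ℝ (Fin N) × EuclideanSpace ℝ (Fin N)) :=
    (WithLp.prodContinuousLinearEquiv 2 ℝ (EuclideanSpace ℝ (Fin N))
      (EuclideanSpace ℝ (Fin N))).symm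
  haveI : FiniteDimensional ℝ
      (WithLp 2 (EuclideanSpace ℝ (Fin N) × EuclideanSpace ℝ (Fin N))) :=
    Module.Finite.equiv
      (WithLp.linearEquiv 2 ℝ (EuclideanSpace ℝ (Fin N) × EuclideanSpace ℝ (Fin N))).symm
  -- basic integrability
  have hIk : ∀ k, IntegrableOn (u' k) (Ioc (0:ℝ) T) volume :=
    fun k => (hk k).1.integrable one_le_two
  have hIv : IntegrableOn v' (Ioc (0:ℝ) T) volume := hv.1.integrable one_le_two
  -- pinX is the inner product of the L2 product space
  have hpin : ∀ a b : EuclideanSpace ℝ (Fin N) × EuclideanSpace ℝ (Fin N),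
      pinX a b = (⟪ψ a, ψ b⟫ : ℝ) := fun a b => rfl
  -- the symplectic operator as a continuous linear map
  let JL : (EuclideanSpace ℝ (Fin N) × EuclideanSpace ℝ (Fin N)) →L[ℝ]
      (EuclideanSpace ℝ (Fin N) × EuclideanSpace ℝ (Fin N)) :=
    (-(ContinuousLinearMap.snd ℝ _ _)).prod (ContinuousLinearMap.fst ℝ _ _)
  have hJLa : ∀ a : EuclideanSpace ℝ (Fin N) × EuclideanSpace ℝ (Fin N), JL a = Jmap a :=
    fun a => rfl
  let C : WithLp 2 (EuclideanSpace ℝ (Fin N) × EuclideanSpace ℝ (Fin N)) →L[ℝ]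
      WithLp 2 (EuclideanSpace ℝ (Fin N) × EuclideanSpace ℝ (Fin N)) :=
    -((ψ.toContinuousLinearMap.comp JL).comp ψ.symm.toContinuousLinearMap)
  have hCkey : ∀ a b : EuclideanSpace ℝ (Fin N) × EuclideanSpace ℝ (Fin N),
      pinX (Jmap a) b = (⟪ψ a, C (ψ b)⟫ : ℝ) := by
    intro a b
    have h1 : C (ψ b) = -ψ (Jmap b) := by
      show -(ψ (JL (ψ.symm (ψ b)))) = -ψ (Jmap b)
      rw [ψ.symm_apply_apply, hJLa]
    rw [h1, inner_neg_right, ← hpin, pinX_J_skew]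
  -- transported functions
  let f : ℕ → ℝ → WithLp 2 (EuclideanSpace ℝ (Fin N) × EuclideanSpace ℝ (Fin N)) :=
    fun k t => ψ (u' k t)
  let g : ℝ → WithLp 2 (EuclideanSpace ℝ (Fin N) × EuclideanSpace ℝ (Fin N)) :=
    fun t => ψ (v' t)
  have hfY : ∀ k, MemLp (f k) 2 (volume.restrict (Ioc (0:ℝ) T)) := by
    intro k
    have := ψ.toContinuousLinearMap.comp_memLp' (hk k).1
    exact this
  have hgY : MemLp g 2 (volume.restrict (Ioc (0:ℝ) T)) := by
    have := ψ.toContinuousLinearMap.comp_memLp' hv.1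
    exact this
  -- transported weak convergence
  have hweakY : ∀ w : ℝ → WithLp 2 (EuclideanSpace ℝ (Fin N) × EuclideanSpace ℝ (Fin N)),
      MemLp w 2 (volume.restrict (Ioc (0:ℝ) T)) →
      Tendsto (fun k => ∫ t in Ioc (0:ℝ) T, (⟪f k t, w t⟫ : ℝ)) atTop
        (𝓝 (∫ t in Ioc (0:ℝ) T, (⟪g t, w t⟫ : ℝ))) := by
    intro w hw
    have hw' : MemLp (fun t => ψ.symm (w t)) 2 (volume.restrict (Ioc (0:ℝ) T)) := by
      have := ψ.symm.toContinuousLinearMap.comp_memLp' hw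
      exact this
    have heq : ∀ (h : ℝ → EuclideanSpace ℝ (Fin N) × EuclideanSpace ℝ (Fin N)),
        (fun t => pinX (h t) (ψ.symm (w t))) = fun t => (⟪ψ (h t), w t⟫ : ℝ) := by
      intro h
      funext t
      rw [hpin, ψ.apply_symm_apply]
    have hthis := hweak _ hw'
    have h1 : ∀ k, (∫ t in Ioc (0:ℝ) T, pinX (u' k t) (ψ.symm (w t)))
        = ∫ t in Ioc (0:ℝ) T, (⟪ψ (u' k t), w t⟫ : ℝ) := fun k => by rw [heq (u' k)]
    have h2 : (∫ t in Ioc (0:ℝ) T, pinX (v' t) (ψ.symm (w t)))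
        = ∫ t in Ioc (0:ℝ) T, (⟪ψ (v' t), w t⟫ : ℝ) := by rw [heq v']
    rw [h2] at hthis
    exact Tendsto.congr h1 hthis
  -- ψ commutes with Wfun
  have hWψ : ∀ (h : ℝ → EuclideanSpace ℝ (Fin N) × EuclideanSpace ℝ (Fin N)),
      IntegrableOn h (Ioc (0:ℝ) T) volume →
      ∀ t ∈ Icc (0:ℝ) T, ψ (Wfun T h t) = Wfun T (fun s => ψ (h s)) t := by
    intro h hh t ht
    have hii : ∀ r ∈ Icc (0:ℝ) T, IntervalIntegrable h volume 0 r := by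
      intro r hr
      rw [intervalIntegrable_iff_integrableOn_Ioc_of_le hr.1]
      exact IntegrableOn.mono_set hh (Ioc_subset_Ioc_right hr.2)
    have e1 : ∀ r ∈ Icc (0:ℝ) T,
        ψ (∫ s in (0:ℝ)..r, h s) = ∫ s in (0:ℝ)..r, ψ (h s) := by
      intro r hr
      have := ψ.toContinuousLinearMap.intervalIntegral_comp_comm (hii r hr)
      simpa using this.symm
    rw [Wfun, Wfun, map_sub, _root_.map_smul, e1 t ht, e1 T ⟨hT.le, le_rfl⟩]
  -- rewrite the functional
  have hrw : ∀ (uu hh : ℝ → EuclideanSpace ℝ (Fin N) × EuclideanSpace ℝ (Fin N)),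
      InA2 T uu hh →
      Ffun T uu hh = ∫ t in Ioc (0:ℝ) T,
        (⟪ψ (hh t), C (Wfun T (fun s => ψ (hh s)) t)⟫ : ℝ) := by
    intro uu hh hA
    have hhI : IntegrableOn hh (Ioc (0:ℝ) T) volume := hA.1.integrable one_le_two
    rw [Ffun_eq hT hA.2 hhI]
    refine setIntegral_congr_fun measurableSet_Ioc fun t htm => ?_
    rw [hCkey, hWψ hh hhI t (Ioc_subset_Icc_self htm)]
  have hcore := core_tendsto T hT C f g hfY hgY hweakY
  rw [show (fun k => ∫ t in Ioc (0:ℝ) T, (⟪f k t, C (Wfun T (f k) t)⟫ : ℝ))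
      = fun k => Ffun T (u k) (u' k) from funext fun k => (hrw (u k) (u' k) (hk k)).symm,
    show (∫ t in Ioc (0:ℝ) T, (⟪g t, C (Wfun T g t)⟫ : ℝ)) = Ffun T v v' from
      (hrw v v' hv).symm] at hcore
  exact hcore
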